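/- Let G be any finite simple graph and v a free vertex of G (a vertex belonging to a unique maximal clique). Then v does not belong to any cut set of G. -/

import Mathlib

open SimpleGraph Finset

variable {V : Type*}

/-- Number of connected components of the induced subgraph on the complement of `S`. -/
noncomputable def ncomp (G : SimpleGraph V) (S : Finset V) : ℕ :=
  Nat.card ((G.induce {v | v ∉ S}).ConnectedComponent)

/-- `S` is a cut set of `G`. -/
def cutSet [DecidableEq V] (G : SimpleGraph V) (S : Finset V) : Prop :=
  S = ∅ ∨ ∀ i ∈ S, ncomp G (S.erase i) < ncomp G S

/-- `G` is combinatorially unmixed. -/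
def unmixed [DecidableEq V] (G : SimpleGraph V) : Prop :=
  G.Connected ∧ ∀ S : Finset V, cutSet G S → ncomp G S = S.card + 1

/-- `G` is accessible. -/
def accessible [DecidableEq V] (G : SimpleGraph V) : Prop :=
  unmixed G ∧ ∀ S : Finset V, cutSet G S → S ≠ ∅ → ∃ s ∈ S, cutSet G (S.erase s)

/-- A block: connected with no cut vertices. -/
def isBlock [DecidableEq V] (G : SimpleGraph V) : Prop :=
  G.Connected ∧ ∀ v : V, ¬ cutSet G {v}

/-- The graph obtained from `B` by attaching a whisker (pendant leaf) at each `f i`. -/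
def whisker {k : ℕ} (B : SimpleGraph V) (f : Fin k → V) : SimpleGraph (V ⊕ Fin k) :=
  SimpleGraph.fromRel (fun x y => match x, y with
    | Sum.inl a, Sum.inl b => B.Adj a b
    | Sum.inl a, Sum.inr i => a = f i
    | _, _ => False)

/-- A free vertex: a vertex contained in a unique maximal clique. -/
def freeVertex (G : SimpleGraph V) (v : V) : Prop :=
  ∃! s : Set V, v ∈ s ∧ G.IsClique s ∧ ∀ t, G.IsClique t → s ⊆ t → s = t

/-- Every clique is contained in a maximal clique (finite case). -/
lemma exists_maximal_clique [Fintype V] (G : SimpleGraph V) {s : Set V} (hs : G.IsClique s) :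
    ∃ t : Set V, s ⊆ t ∧ G.IsClique t ∧ ∀ u, G.IsClique u → t ⊆ u → t = u := by
  obtain ⟨t, ⟨ht, hst⟩, hmax⟩ :=
    Set.Finite.exists_maximalFor id {t : Set V | G.IsClique t ∧ s ⊆ t}
      (Set.toFinite _) ⟨s, hs, subset_rfl⟩
  exact ⟨t, hst, ht, fun u hu htu => Set.Subset.antisymm htu (hmax ⟨hu, hst.trans htu⟩ htu)⟩

/-- The neighbors of a free vertex are pairwise adjacent. -/
lemma freeVertex_nbrs_adj [Fintype V] {G : SimpleGraph V} {v : V} (hv : freeVertex G v)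
    {a b : V} (ha : G.Adj v a) (hb : G.Adj v b) (hab : a ≠ b) : G.Adj a b := by
  obtain ⟨s, hs, huniq⟩ := hv
  have key : ∀ x : V, G.Adj v x → x ∈ s := by
    intro x hx
    have hcl : G.IsClique {v, x} := by
      intro p hp q hq hpq
      simp only [Set.mem_insert_iff, Set.mem_singleton_iff] at hp hq
      rcases hp with rfl | rfl <;> rcases hq with rfl | rfl
      · exact absurd rfl hpq
      · exact hx
      · exact hx.symm
      · exact absurd rfl hpq
    obtain ⟨t, hsub, ht, hmax⟩ := exists_maximal_clique G hcl
    have heq : t = s := huniq t ⟨hsub (by simp), ht, hmax⟩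
    exact heq ▸ hsub (by simp)
  exact hs.2.1 (key a ha) (key b hb) hab

/-- Transfer reachability: removing `v` from the graph preserves reachability between other
vertices, when the neighbors of `v` are pairwise adjacent. -/
lemma reach_transfer [Fintype V] [DecidableEq V] {G : SimpleGraph V} {v : V} {S : Finset V}
    (hvS : v ∈ S)
    (hcl : ∀ a b : V, G.Adj v a → G.Adj v b → a ≠ b → G.Adj a b) :
    ∀ n : ℕ, ∀ (a b : {x : V // x ∉ S.erase v})
      (w : (G.induce {x : V | x ∉ S.erase v}).Walk a b),
      w.length ≤ n → ∀ (ha : a.1 ∉ S) (hb : b.1 ∉ S),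
      (G.induce {x : V | x ∉ S}).Reachable ⟨a.1, ha⟩ ⟨b.1, hb⟩ := by
  intro n
  induction n with
  | zero =>
    intro a b w hw ha hb
    cases w with
    | nil => exact Reachable.refl _
    | cons h p => simp at hw
  | succ n ih =>
    intro a b w hw ha hb
    cases w with
    | nil => exact Reachable.refl _
    | @cons _ c _ h p =>
      by_cases hc : c.1 = v
      · -- next vertex is v; look one step further
        cases p with
        | nil =>
          rw [hc] at hb
          exact absurd hvS hb
        | @cons _ d _ h2 p2 =>
          have hav : G.Adj v a.1 := by
            have := h.symm
            simp only [comap_adj, Function.Embedding.coe_subtype] at this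
            rwa [hc] at this
          have hdv : G.Adj v d.1 := by
            have := h2
            simp only [comap_adj, Function.Embedding.coe_subtype] at this
            rwa [hc] at this
          have hd : d.1 ∉ S := by
            have hd' := d.2
            simp only [Set.mem_setOf_eq, Finset.mem_erase] at hd'
            intro hmem
            exact hd' ⟨hdv.ne', hmem⟩
          have hrest : (G.induce {x : V | x ∉ S}).Reachable ⟨d.1, hd⟩ ⟨b.1, hb⟩ := by
            apply ih d b p2
            · have : p2.length + 2 ≤ n + 1 := by simpa [SimpleGraph.Walk.length_cons] using hw
              omega
          by_cases had : a.1 = d.1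
          · have : (⟨a.1, ha⟩ : {x : V // x ∉ S}) = ⟨d.1, hd⟩ := Subtype.ext had
            exact this ▸ hrest
          · have hadj : (G.induce {x : V | x ∉ S}).Adj ⟨a.1, ha⟩ ⟨d.1, hd⟩ := by
              simp only [comap_adj, Function.Embedding.coe_subtype]
              exact hcl a.1 d.1 hav hdv had
            exact (hadj.reachable).trans hrest
      · have hcS : c.1 ∉ S := by
          have hc' := c.2
          simp only [Set.mem_setOf_eq, Finset.mem_erase] at hc'
          intro hmem
          exact hc' ⟨hc, hmem⟩
        have hadj : (G.induce {x : V | x ∉ S}).Adj ⟨a.1, ha⟩ ⟨c.1, hcS⟩ := by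
          have := h
          simp only [comap_adj, Function.Embedding.coe_subtype] at this ⊢
          exact this
        have hrest : (G.induce {x : V | x ∉ S}).Reachable ⟨c.1, hcS⟩ ⟨b.1, hb⟩ := by
          apply ih c b p
          · have : p.length + 1 ≤ n + 1 := by simpa [SimpleGraph.Walk.length_cons] using hw
            omega
        exact (hadj.reachable).trans hrest

theorem freeVertex_not_mem_cutSet [Fintype V] [DecidableEq V] (G : SimpleGraph V)
    (v : V) (hv : freeVertex G v) :
    ∀ S : Finset V, cutSet G S → v ∉ S := by
  intro S hS hvS
  rcases hS with rfl | hS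
  · exact absurd hvS (by simp)
  have hlt := hS v hvS
  have hcl : ∀ a b : V, G.Adj v a → G.Adj v b → a ≠ b → G.Adj a b :=
    fun a b ha hb hab => freeVertex_nbrs_adj hv ha hb hab
  -- the inclusion hom
  have hsub : ∀ x : V, x ∉ S → x ∉ S.erase v := fun x hx => fun h => hx (Finset.mem_of_mem_erase h)
  let φ : G.induce {x : V | x ∉ S} →g G.induce {x : V | x ∉ S.erase v} :=
    { toFun := fun a => ⟨a.1, hsub a.1 a.2⟩
      map_rel' := by
        intro a b h
        simp only [comap_adj, Function.Embedding.coe_subtype] at h ⊢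
        exact h }
  have hinj : Function.Injective (ConnectedComponent.map φ) := by
    intro x y
    refine ConnectedComponent.ind₂ (fun a b => ?_) x y
    intro hxy
    simp only [ConnectedComponent.map_mk] at hxy
    have hreach := ConnectedComponent.eq.mp hxy
    obtain ⟨w⟩ := hreach
    have := reach_transfer hvS hcl w.length (φ a) (φ b) w le_rfl a.2 b.2
    exact ConnectedComponent.eq.mpr (by
      have ha : (⟨(φ a).1, a.2⟩ : {x : V // x ∉ S}) = a := Subtype.ext rfl
      have hb : (⟨(φ b).1, b.2⟩ : {x : V // x ∉ S}) = b := Subtype.ext rfl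
      exact ha ▸ hb ▸ this)
  have hle : ncomp G S ≤ ncomp G (S.erase v) :=
    Nat.card_le_card_of_injective _ hinj
  omega
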